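/- If a graph G has a circuit H such that Ē(H) contains at least three edges, then the line graph L(G) has a cycle C whose vertex set is exactly Ē(H). -/

import Mathlib

open SimpleGraph

namespace Paper

/-- A graph is traceable if it has a hamiltonian path. -/
def Traceable {α : Type*} (G : SimpleGraph α) : Prop :=
  ∃ (a b : α) (p : G.Walk a b), p.IsPath ∧ ∀ w, w ∈ p.support

/-- A graph is hamiltonian if it has a hamiltonian cycle. -/
def HamGraph {α : Type*} (G : SimpleGraph α) : Prop :=
  ∃ (a : α) (p : G.Walk a a), p.IsCycle ∧ ∀ w, w ∈ p.support

/-- A graph together with its (varying) vertex type. -/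
def GraphSys : Type 1 := Σ V : Type, SimpleGraph V

/-- One application of the line-graph operator. -/
def lineStep (p : GraphSys) : GraphSys := ⟨p.2.edgeSet, p.2.lineGraph⟩

/-- The `n`-th iterated line graph (with `L^0(G) = G`). -/
def iterLine (p : GraphSys) (n : ℕ) : GraphSys := lineStep^[n] p

/-- The hamiltonian path index: the least `n` with `L^n(G)` traceable. -/
noncomputable def hp {V : Type} (G : SimpleGraph V) : ℕ :=
  sInf {n | Traceable (iterLine ⟨V, G⟩ n).2}

/-- The hamiltonian index: the least `n` with `L^n(G)` hamiltonian. -/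
noncomputable def hIndex {V : Type} (G : SimpleGraph V) : ℕ :=
  sInf {n | HamGraph (iterLine ⟨V, G⟩ n).2}

/-- Degree of `v` in a subgraph `H` (number of neighbours). -/
noncomputable def sdeg {V : Type*} {G : SimpleGraph V} (H : G.Subgraph) (v : V) : ℕ :=
  (H.neighborSet v).ncard

/-- Degree of `v` in `G` (number of neighbours). -/
noncomputable def gdeg {V : Type*} (G : SimpleGraph V) (v : V) : ℕ :=
  (G.neighborSet v).ncard

/-- `Ē(H)`: the set of edges of `G` incident with a vertex of `H`. -/
def barE {V : Type*} (G : SimpleGraph V) (H : G.Subgraph) : Set (Sym2 V) :=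
  {e | e ∈ G.edgeSet ∧ ∃ v ∈ H.verts, v ∈ e}

/-- A circuit: a connected subgraph in which every vertex has even degree
(`K₁` counts as a circuit). -/
def IsCircuit {V : Type*} {G : SimpleGraph V} (H : G.Subgraph) : Prop :=
  H.Connected ∧ ∀ v, Even (sdeg H v)

/-- A branch of `G`: a nontrivial path whose ends have degree `≠ 2` and whose
internal vertices have degree `2`. -/
def IsBranch {V : Type*} (G : SimpleGraph V) {u v : V} (p : G.Walk u v) : Prop :=
  p.IsPath ∧ 0 < p.length ∧ gdeg G u ≠ 2 ∧ gdeg G v ≠ 2 ∧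
    ∀ w ∈ p.support, w ≠ u → w ≠ v → gdeg G w = 2

/-- The family `EUP_k(G)` of subgraphs satisfying (I'), (II), (III), (IV), (V'). -/
def EUP {V : Type*} (G : SimpleGraph V) (k : ℕ) : Set (G.Subgraph) :=
  {H | {v | Odd (sdeg H v)}.ncard ≤ 2 ∧
    (∀ v ∈ H.verts, H.neighborSet v = ∅ → 3 ≤ gdeg G v) ∧
    (∀ v, 3 ≤ gdeg G v → v ∈ H.verts) ∧
    (∀ H1 : G.Subgraph, H1 ≤ H → H1.verts.Nonempty → (H.verts \ H1.verts).Nonempty →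
      ∃ a ∈ H1.verts, ∃ b ∈ H.verts \ H1.verts, G.dist a b ≤ k - 1) ∧
    (∀ (u v : V) (p : G.Walk u v), IsBranch G p →
      (∀ e ∈ p.edges, e ∉ H.edgeSet) → p.length ≤ k + 1) ∧
    (∀ (u v : V) (p : G.Walk u v), IsBranch G p → (∃ w ∈ p.support, gdeg G w = 1) →
      (∀ e ∈ p.edges, e ∉ H.edgeSet) → p.length ≤ k)}

/-- The family `EU_k(G)` of subgraphs satisfying (I), (II), (III), (IV), (V). -/
def EU {V : Type*} (G : SimpleGraph V) (k : ℕ) : Set (G.Subgraph) :=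
  {H | (∀ v, Even (sdeg H v)) ∧
    (∀ v ∈ H.verts, H.neighborSet v = ∅ → 3 ≤ gdeg G v) ∧
    (∀ v, 3 ≤ gdeg G v → v ∈ H.verts) ∧
    (∀ H1 : G.Subgraph, H1 ≤ H → H1.verts.Nonempty → (H.verts \ H1.verts).Nonempty →
      ∃ a ∈ H1.verts, ∃ b ∈ H.verts \ H1.verts, G.dist a b ≤ k - 1) ∧
    (∀ (u v : V) (p : G.Walk u v), IsBranch G p →
      (∀ e ∈ p.edges, e ∉ H.edgeSet) → p.length ≤ k + 1) ∧
    (∀ (u v : V) (p : G.Walk u v), IsBranch G p → (∃ w ∈ p.support, gdeg G w = 1) →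
      p.length ≤ k)}

section CycleOfChain

variable {β : Type*} {Γ : SimpleGraph β}

/-- Build a walk from a chain of adjacencies. -/
def walkFromChain (Γ : SimpleGraph β) :
    (l : List β) → (a c : β) → List.Chain Γ.Adj a (l ++ [c]) → Γ.Walk a c
  | [], _, _, h => Walk.cons (List.chain_cons.mp h).1 Walk.nil
  | b :: t, a, c, h => Walk.cons (List.chain_cons.mp h).1 (walkFromChain Γ t b c (List.chain_cons.mp h).2)

@[simp] lemma walkFromChain_support (l : List β) (a c : β) (h) :
    (walkFromChain Γ l a c h).support = a :: (l ++ [c]) := by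
  induction l generalizing a with
  | nil => simp [walkFromChain]
  | cons b t ih => simp [walkFromChain]; exact ih _ _

lemma walkFromChain_edge_not_mem (l : List β) (a c : β) (h)
    (hn : (a :: (l ++ [c])).Nodup) (hl : l ≠ []) :
    s(a, c) ∉ (walkFromChain Γ l a c h).edges := by
  match l with
  | [] => exact absurd rfl hl
  | b :: t =>
    intro hmem
    rw [show walkFromChain Γ (b :: t) a c h
        = Walk.cons (List.chain_cons.mp h).1 (walkFromChain Γ t b c (List.chain_cons.mp h).2)
        from rfl, Walk.edges_cons, List.mem_cons] at hmem
    rcases hmem with hmem | hmem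
    · have := Sym2.eq_iff.mp hmem.symm
      simp only [List.cons_append, List.nodup_cons, List.mem_cons, List.mem_append,
        List.mem_singleton] at hn
      rcases this with ⟨-, rfl⟩ | ⟨rfl, -⟩
      · -- b = c : but c is last and b is in front, nodup of (b :: t ++ [c])
        exact hn.2.1 (by simp)
      · exact hn.1 (by simp)
    · have ha : a ∈ (walkFromChain Γ t b c (List.chain_cons.mp h).2).support :=
        Walk.fst_mem_support_of_mem_edges _ hmem
      replace ha := (congrArg (a ∈ ·) (walkFromChain_support (Γ := Γ) t b c _)).mp ha
      simp only [List.cons_append, List.nodup_cons] at hn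
      exact hn.1 (by simpa using ha)

/-- From a cyclically-chained nodup list of length ≥ 3, get a cycle with that support. -/
lemma cycle_of_chain (a b : β) (m : List β) (hm : m ≠ [])
    (hn : (a :: b :: m).Nodup) (hc : List.Chain Γ.Adj a (b :: m))
    (hcyc : Γ.Adj (m.getLast hm) a) :
    ∃ C : Γ.Walk a a, C.IsCycle ∧ ∀ f, f ∈ C.support ↔ f ∈ a :: b :: m := by
  obtain ⟨m', c, rfl⟩ := m.eq_nil_or_concat.resolve_left hm
  have hcyc' : Γ.Adj c a := by simpa using hcyc
  clear hcyc
  simp only [List.concat_eq_append] at hn hc ⊢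
  have hch : List.Chain Γ.Adj b (m' ++ [c]) := (List.chain_cons.mp hc).2
  have hab : Γ.Adj a b := (List.chain_cons.mp hc).1
  -- chain from b through m' to c, then extend with c ~ a
  have hch2 : List.Chain Γ.Adj b ((m' ++ [c]) ++ [a]) := by
    rw [List.append_assoc]
    exact (List.isChain_cons_split (l₁ := m') (l₂ := [a]) (c := c)).mpr
      ⟨hch, List.chain_cons.mpr ⟨hcyc', List.Chain.nil⟩⟩
  let p : Γ.Walk b a := walkFromChain Γ (m' ++ [c]) b a hch2
  have hsupp : p.support = b :: ((m' ++ [c]) ++ [a]) := walkFromChain_support _ _ _ _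
  have hnodup : p.support.Nodup := by
    rw [hsupp]
    have : (b :: (m' ++ [c])).Nodup := hn.of_cons
    have ha : a ∉ b :: (m' ++ [c]) := by
      simp only [List.nodup_cons] at hn
      exact hn.1
    rw [List.nodup_cons] at this ⊢
    refine ⟨?_, ?_⟩
    · intro hb; rcases List.mem_append.mp hb with h1 | h1
      · exact this.1 h1
      · simp only [List.mem_singleton] at h1; exact ha (by simp [h1])
    · rw [List.nodup_append]
      refine ⟨this.2, List.nodup_singleton _, ?_⟩
      intro x hx y hy hxy
      simp only [List.mem_singleton] at hy
      subst hy; subst hxy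
      exact ha (by simp [hx])
  have hpath : p.IsPath := Walk.IsPath.mk' hnodup
  have hne : s(b, a) ∉ p.edges := by
    apply walkFromChain_edge_not_mem
    · rw [show (b :: ((m' ++ [c]) ++ [a])) = p.support from hsupp.symm]
      exact hnodup
    · simp
  have hnotmem : s(a, b) ∉ p.edges := by rw [Sym2.eq_swap]; exact hne
  refine ⟨Walk.cons hab p, ?_, ?_⟩
  · exact (Walk.cons_isCycle_iff p hab).mpr ⟨hpath, hnotmem⟩
  · intro f
    rw [Walk.support_cons, hsupp]
    simp only [List.mem_cons, List.mem_append, List.mem_singleton]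
    tauto

end CycleOfChain

section Ins

variable {V : Type*} [DecidableEq V] {G : SimpleGraph V}

/-- The relation "two edges share a vertex". -/
def Share (e f : Sym2 V) : Prop := ∃ z, z ∈ e ∧ z ∈ f

/-- Insert pendant edges (given by `P`) at the first visit of each vertex of a walk. -/
def ins : {u v : V} → G.Walk u v → (V → List (Sym2 V)) → List (Sym2 V)
  | u, _, .nil, P => P u
  | u, _, .cons (v := y) _ q, P => P u ++ s(u, y) :: ins q (Function.update P u [])

lemma mem_ins {u v : V} (w : G.Walk u v) (P : V → List (Sym2 V)) (f : Sym2 V) :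
    f ∈ ins w P ↔ f ∈ w.edges ∨ ∃ x ∈ w.support, f ∈ P x := by
  induction w generalizing P with
  | nil => simp [ins]
  | @cons u y v h q ih =>
    simp only [ins, List.mem_append, List.mem_cons, Walk.edges_cons, Walk.support_cons, ih]
    constructor
    · rintro (hf | hf | hf | ⟨x, hx, hfx⟩)
      · exact Or.inr ⟨u, by simp, hf⟩
      · exact Or.inl (Or.inl hf)
      · exact Or.inl (Or.inr hf)
      · by_cases hxu : x = u
        · subst hxu; simp [Function.update_self] at hfx
        · rw [Function.update_of_ne hxu] at hfx
          exact Or.inr ⟨x, by simp [hx], hfx⟩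
    · rintro ((hf | hf) | ⟨x, hx, hfx⟩)
      · exact Or.inr (Or.inl hf)
      · exact Or.inr (Or.inr (Or.inl hf))
      · rcases hx with rfl | hx
        · exact Or.inl hfx
        · by_cases hxu : x = u
          · subst hxu; exact Or.inl hfx
          · exact Or.inr (Or.inr (Or.inr ⟨x, hx, by rwa [Function.update_of_ne hxu]⟩))

lemma ins_nodup {u v : V} (w : G.Walk u v) (P : V → List (Sym2 V)) (hw : w.IsTrail)
    (hPn : ∀ x, (P x).Nodup) (hdisj : ∀ x y f, f ∈ P x → f ∈ P y → x = y)
    (hPe : ∀ x f, f ∈ P x → f ∉ w.edges) : (ins w P).Nodup := by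
  induction w generalizing P with
  | nil => exact hPn _
  | @cons u y v h q ih =>
    rw [Walk.isTrail_cons] at hw
    have hPe' : ∀ x f, f ∈ Function.update P u [] x → f ∉ q.edges := by
      intro x f hf hfq
      by_cases hxu : x = u
      · subst hxu; simp [Function.update_self] at hf
      · rw [Function.update_of_ne hxu] at hf
        exact hPe x f hf (by simp [hfq])
    have hih : (ins q (Function.update P u [])).Nodup := by
      refine ih _ hw.1 ?_ ?_ hPe'
      · intro x; by_cases hxu : x = u
        · subst hxu; simp
        · rw [Function.update_of_ne hxu]; exact hPn x
      · intro x y f hx hy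
        by_cases hxu : x = u
        · subst hxu; simp [Function.update_self] at hx
        · by_cases hyu : y = u
          · subst hyu; simp [Function.update_self] at hy
          · rw [Function.update_of_ne hxu] at hx
            rw [Function.update_of_ne hyu] at hy
            exact hdisj x y f hx hy
    simp only [ins, List.nodup_append, List.nodup_cons]
    refine ⟨hPn u, ⟨?_, hih⟩, ?_⟩
    · -- s(u,y) ∉ ins q P'
      rw [mem_ins]
      rintro (hmem | ⟨x, hx, hfx⟩)
      · exact hw.2 hmem
      · by_cases hxu : x = u
        · subst hxu; simp [Function.update_self] at hfx
        · rw [Function.update_of_ne hxu] at hfx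
          exact hPe x _ hfx (by simp)
    · -- disjointness of P u and s(u,y) :: ins q P'
      intro f hf g hf2 hfg
      subst hfg
      rcases List.mem_cons.mp hf2 with rfl | hf2
      · exact hPe u _ hf (by simp)
      · rw [mem_ins] at hf2
        rcases hf2 with hmem | ⟨x, hx, hfx⟩
        · exact hPe u f hf (by simp [hmem])
        · by_cases hxu : x = u
          · subst hxu; simp [Function.update_self] at hfx
          · rw [Function.update_of_ne hxu] at hfx
            exact hxu (hdisj x u f hfx hf)

lemma chain'_share_of_all_mem {x : V} {l : List (Sym2 V)} (h : ∀ f ∈ l, x ∈ f) :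
    List.Chain' (Share (V := V)) l := by
  induction l with
  | nil => exact List.isChain_nil
  | cons a t ih =>
    refine List.isChain_cons.mpr ⟨?_, ih (fun f hf => h f (by simp [hf]))⟩
    intro b hb
    exact ⟨x, h a (by simp), h b (by simp [List.mem_of_mem_head? hb])⟩

lemma ins_chain {u v : V} (w : G.Walk u v) (P : V → List (Sym2 V))
    (hP : ∀ x f, f ∈ P x → x ∈ f) :
    List.Chain' (Share (V := V)) (ins w P) ∧
      (∀ f ∈ (ins w P).head?, u ∈ f) ∧ (∀ f ∈ (ins w P).getLast?, v ∈ f) := by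
  induction w generalizing P with
  | nil =>
    refine ⟨chain'_share_of_all_mem (fun f hf => hP _ f hf), ?_, ?_⟩
    · intro f hf; exact hP _ f (List.mem_of_mem_head? hf)
    · intro f hf; exact hP _ f (List.mem_of_mem_getLast? hf)
  | @cons u y v h q ih =>
    have hP' : ∀ x f, f ∈ Function.update P u [] x → x ∈ f := by
      intro x f hf
      by_cases hxu : x = u
      · subst hxu; simp [Function.update_self] at hf
      · rw [Function.update_of_ne hxu] at hf; exact hP x f hf
    obtain ⟨ihc, ihh, ihl⟩ := ih _ hP'
    have hall : ∀ f ∈ P u, u ∈ f := fun f hf => hP u f hf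
    refine ⟨?_, ?_, ?_⟩
    · show List.IsChain _ (P u ++ s(u, y) :: ins q (Function.update P u []))
      rw [List.isChain_append]
      refine ⟨chain'_share_of_all_mem hall, ?_, ?_⟩
      · rw [List.isChain_cons]
        refine ⟨?_, ihc⟩
        intro f hf
        exact ⟨y, by simp, ihh f hf⟩
      · intro f hf g hg
        rw [List.head?_cons, Option.mem_some_iff] at hg
        subst hg
        exact ⟨u, hall f (List.mem_of_mem_getLast? hf), by simp⟩
    · intro f hf
      show u ∈ f
      rcases hu : P u with _ | ⟨a, t⟩
      · rw [show ins (Walk.cons h q) P = P u ++ s(u, y) :: ins q (Function.update P u []) from rfl,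
          hu, List.nil_append, List.head?_cons, Option.mem_some_iff] at hf
        subst hf; simp
      · rw [show ins (Walk.cons h q) P = P u ++ s(u, y) :: ins q (Function.update P u []) from rfl,
          hu] at hf
        simp only [List.cons_append, List.head?_cons, Option.mem_some_iff] at hf
        subst hf
        exact hall a (by simp [hu])
    · intro f hf
      show v ∈ f
      rw [show ins (Walk.cons h q) P = P u ++ s(u, y) :: ins q (Function.update P u []) from rfl]
        at hf
      rcases hq : ins q (Function.update P u []) with _ | ⟨a, t⟩
      · -- then q has no edges, so y = v
        have hyv : y = v := by
          have : q.edges = [] := by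
            rcases he : q.edges with _ | ⟨e, es⟩
            · rfl
            · exfalso
              have : e ∈ ins q (Function.update P u []) := by
                rw [mem_ins]; exact Or.inl (by simp [he])
              rw [hq] at this; simp at this
          exact Walk.eq_of_length_eq_zero (by rw [← Walk.length_edges, this]; rfl)
        subst hyv
        rw [hq, List.getLast?_append_cons, List.getLast?_singleton, Option.mem_some_iff] at hf
        subst hf; simp
      · rw [hq] at hf
        have : (P u ++ s(u, y) :: a :: t).getLast? = (a :: t).getLast? := by
          rw [List.getLast?_append_cons, List.getLast?_cons_cons]
        rw [this] at hf
        exact ihl f (by rwa [hq])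

end Ins

section Euler


variable {V : Type*} [DecidableEq V] {G : SimpleGraph V} {H : G.Subgraph}

lemma sdeg_eq_ncard_incidence (u : V) :
    sdeg H u = {e ∈ H.edgeSet | u ∈ e}.ncard := by
  have himg : (fun y => s(u, y)) '' H.neighborSet u = {e ∈ H.edgeSet | u ∈ e} := by
    ext e
    constructor
    · rintro ⟨y, hy, rfl⟩
      exact ⟨Subgraph.mem_edgeSet.mpr hy, by simp⟩
    · rintro ⟨he, hu⟩
      obtain ⟨y, rfl⟩ := Sym2.mem_iff_exists.mp hu
      exact ⟨y, Subgraph.mem_edgeSet.mp he, rfl⟩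
  have hinj : Function.Injective (fun y : V => s(u, y)) := by
    intro a b hab
    rcases Sym2.eq_iff.mp hab with ⟨-, h⟩ | ⟨h1, h2⟩
    · exact h
    · exact h2.trans h1
  rw [sdeg, ← Set.ncard_image_of_injective (H.neighborSet u) hinj, himg]

lemma exists_unused_incident (hfin : H.edgeSet.Finite) (heven : ∀ x, Even (sdeg H x)) (u : V)
    (used : List (Sym2 V)) (hnodup : used.Nodup) (hsub : ∀ e ∈ used, e ∈ H.edgeSet)
    (hodd : Odd (used.countP (fun e => u ∈ e))) :
    ∃ e ∈ H.edgeSet, u ∈ e ∧ e ∉ used := by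
  by_contra hno
  push_neg at hno
  have hBA : {e ∈ H.edgeSet | u ∈ e} = {e | e ∈ used ∧ u ∈ e} := by
    ext e
    exact ⟨fun ⟨h1, h2⟩ => ⟨hno e h1 h2, h2⟩, fun ⟨h1, h2⟩ => ⟨hsub e h1, h2⟩⟩
  have hcard : {e | e ∈ used ∧ u ∈ e}.ncard = used.countP (fun e => u ∈ e) := by
    have hfilter : {e | e ∈ used ∧ u ∈ e} = ↑((used.filter (fun e => u ∈ e)).toFinset) := by
      ext e; simp [List.mem_filter]
    rw [hfilter, Set.ncard_coe_finset, List.toFinset_card_of_nodup (hnodup.filter _),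
      List.countP_eq_length_filter]
  have heq : sdeg H u = used.countP (fun e => u ∈ e) := by
    rw [sdeg_eq_ncard_incidence, hBA, hcard]
  have hev := heven u
  rw [heq] at hev
  exact (Nat.not_even_iff_odd.mpr hodd) hev

lemma exists_closed_trail_extension (hfin : H.edgeSet.Finite) (heven : ∀ x, Even (sdeg H x))
    {c : V} (w : G.Walk c c) (hw : w.IsTrail) (hwsub : ∀ e ∈ w.edges, e ∈ H.edgeSet)
    (x : V) (e0 : Sym2 V) (he0 : e0 ∈ H.edgeSet) (hxe0 : x ∈ e0) (he0w : e0 ∉ w.edges) :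
    ∃ t : G.Walk x x, t.IsTrail ∧ 0 < t.length ∧ ∀ e ∈ t.edges, e ∈ H.edgeSet ∧ e ∉ w.edges := by
  set S : Set ℕ :=
    {n | ∃ (u : V) (t : G.Walk x u), t.IsTrail ∧
      (∀ e ∈ t.edges, e ∈ H.edgeSet ∧ e ∉ w.edges) ∧ t.length = n} with hS
  have h1 : 1 ∈ S := by
    obtain ⟨b, rfl⟩ := Sym2.mem_iff_exists.mp hxe0
    have hadj : G.Adj x b := (Subgraph.mem_edgeSet.mp he0).adj_sub
    refine ⟨b, Walk.cons hadj Walk.nil, ?_, ?_, rfl⟩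
    · simp [Walk.isTrail_def]
    · intro e he
      simp only [Walk.edges_cons, Walk.edges_nil, List.mem_singleton] at he
      subst he
      exact ⟨he0, he0w⟩
  have hbdd : BddAbove S := by
    refine ⟨hfin.toFinset.card, ?_⟩
    rintro n ⟨u, t, ht, hsub, rfl⟩
    have h1 : t.edges.toFinset.card = t.edges.length := List.toFinset_card_of_nodup ht.edges_nodup
    have h2 : t.edges.toFinset ⊆ hfin.toFinset := by
      intro e he
      rw [List.mem_toFinset] at he
      rw [Set.Finite.mem_toFinset]
      exact (hsub e he).1
    calc t.length = t.edges.length := (Walk.length_edges t).symm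
    _ = t.edges.toFinset.card := h1.symm
    _ ≤ hfin.toFinset.card := Finset.card_le_card h2
  have hmem : sSup S ∈ S := Nat.sSup_mem ⟨1, h1⟩ hbdd
  obtain ⟨u, t, ht, hsub, hlen⟩ := hmem
  have hux : u = x := by
    by_contra hux
    -- endpoint has odd incidence count; extend, contradicting maximality
    have hoddt : Odd (t.edges.countP (fun e => u ∈ e)) := by
      rw [← Nat.not_even_iff_odd]
      intro hev
      rw [ht.even_countP_edges_iff u] at hev
      exact (hev (fun h => hux h.symm)).2 rfl
    have hevw : Even (w.edges.countP (fun e => u ∈ e)) := by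
      rw [hw.even_countP_edges_iff u]
      intro h; exact absurd rfl h
    have hnodup : (w.edges ++ t.edges).Nodup := by
      refine List.Nodup.append hw.edges_nodup ht.edges_nodup ?_
      intro e hew het
      exact (hsub e het).2 hew
    have hodd : Odd ((w.edges ++ t.edges).countP (fun e => u ∈ e)) := by
      rw [List.countP_append]
      exact hevw.add_odd hoddt
    obtain ⟨e, he, hue, henotin⟩ := exists_unused_incident hfin heven u
      (w.edges ++ t.edges) hnodup
      (by intro e he; rcases List.mem_append.mp he with h | h
          exacts [hwsub e h, (hsub e h).1]) hodd
    obtain ⟨b, rfl⟩ := Sym2.mem_iff_exists.mp hue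
    have hadj : G.Adj u b := (Subgraph.mem_edgeSet.mp he).adj_sub
    have hnew : t.length + 1 ∈ S := by
      refine ⟨b, t.concat hadj, ?_, ?_, by rw [Walk.length_concat]⟩
      · rw [Walk.isTrail_def, Walk.edges_concat, List.concat_eq_append, List.nodup_append]
        refine ⟨ht.edges_nodup, List.nodup_singleton _, ?_⟩
        intro e he1 e' he2 hee
        rw [List.mem_singleton] at he2
        subst he2
        subst hee
        exact henotin (by simp [he1])
      · intro e hee
        rw [Walk.edges_concat, List.concat_eq_append, List.mem_append, List.mem_singleton] at hee
        rcases hee with hee | hee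
        · exact hsub e hee
        · subst hee
          exact ⟨he, fun hc => henotin (by simp [hc])⟩
    have := le_csSup hbdd hnew
    omega
  subst hux
  refine ⟨t, ht, ?_, hsub⟩
  have : 1 ≤ sSup S := le_csSup hbdd h1
  omega

/-- Transfer a walk in `H.coe` to a walk in `G` whose edges lie in `H.edgeSet`. -/
lemma exists_gwalk {s t : H.verts} (p : H.coe.Walk s t) :
    ∃ q : G.Walk s.1 t.1, ∀ e ∈ q.edges, e ∈ H.edgeSet := by
  induction p with
  | nil => exact ⟨Walk.nil, by simp⟩
  | @cons a m b h q ih =>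
    obtain ⟨q', hq'⟩ := ih
    have hadj : H.Adj a.1 m.1 := h
    refine ⟨Walk.cons hadj.adj_sub q', ?_⟩
    intro e he
    rw [Walk.edges_cons, List.mem_cons] at he
    rcases he with rfl | he
    · exact Subgraph.mem_edgeSet.mpr hadj
    · exact hq' e he

lemma scan_walk {c : V} (w : G.Walk c c) :
    ∀ {z a : V} (q : G.Walk z a), z ∈ w.support → (∀ e ∈ q.edges, e ∈ H.edgeSet) →
      (∃ x ∈ w.support, ∃ e ∈ H.edgeSet, x ∈ e ∧ e ∉ w.edges) ∨ a ∈ w.support := by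
  intro z a q
  induction q with
  | nil => exact fun hz _ => Or.inr hz
  | @cons z m a h q ih =>
    intro hz hsub
    by_cases hmem : s(z, m) ∈ w.edges
    · exact ih (Walk.snd_mem_support_of_mem_edges w hmem)
        (fun e he => hsub e (by simp [he]))
    · exact Or.inl ⟨z, hz, s(z, m), hsub _ (by simp), by simp, hmem⟩

lemma subgraph_neighbor_nonempty (hconn : H.Connected) {u v : V}
    (hu : u ∈ H.verts) (hv : v ∈ H.verts) (huv : u ≠ v) : ∃ y, H.Adj u y := by
  obtain ⟨p⟩ := hconn.coe ⟨u, hu⟩ ⟨v, hv⟩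
  have : ∀ {s t : H.verts} (_ : H.coe.Walk s t), s.1 = t.1 ∨ ∃ y, H.Adj s.1 y := by
    intro s t p
    cases p with
    | nil => exact Or.inl rfl
    | cons h q => exact Or.inr ⟨_, h⟩
  rcases this p with h | h
  · exact absurd h huv
  · exact h

lemma euler_loop (hfin : H.edgeSet.Finite) (hconn : H.Connected)
    (heven : ∀ x, Even (sdeg H x)) (c : V) (hc : c ∈ H.verts) :
    ∀ (n : ℕ) (w : G.Walk c c), w.IsTrail → (∀ e ∈ w.edges, e ∈ H.edgeSet) →
      (H.edgeSet \ {e | e ∈ w.edges}).ncard = n →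
      ∃ w' : G.Walk c c, w'.IsTrail ∧ (∀ e, e ∈ w'.edges ↔ e ∈ H.edgeSet) := by
  intro n
  induction n using Nat.strong_induction_on with
  | _ n IH =>
    intro w hw hsub hn
    by_cases hdiff : H.edgeSet \ {e | e ∈ w.edges} = ∅
    · refine ⟨w, hw, fun e => ⟨fun he => hsub e he, fun he => ?_⟩⟩
      by_contra hne
      exact absurd (Set.eq_empty_iff_forall_notMem.mp hdiff e) (fun h => h ⟨he, hne⟩)
    · obtain ⟨e0, he0H, he0w⟩ := Set.nonempty_iff_ne_empty.mpr hdiff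
      simp only [Set.mem_setOf_eq] at he0w
      -- find a vertex on w incident with an unused edge
      obtain ⟨x, hx, e1, he1H, hxe1, he1w⟩ :
          ∃ x ∈ w.support, ∃ e ∈ H.edgeSet, x ∈ e ∧ e ∉ w.edges := by
        induction e0 using Sym2.ind with
        | _ a b =>
          have hadj : H.Adj a b := Subgraph.mem_edgeSet.mp he0H
          have ha : a ∈ H.verts := H.edge_vert hadj
          obtain ⟨p⟩ := hconn.coe ⟨c, hc⟩ ⟨a, ha⟩
          obtain ⟨q, hq⟩ := exists_gwalk p
          rcases scan_walk w q (Walk.start_mem_support w) hq with h | h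
          · exact h
          · exact ⟨a, h, s(a, b), he0H, by simp, he0w⟩
      obtain ⟨t, ht, htlen, htsub⟩ :=
        exists_closed_trail_extension hfin heven w hw hsub x e1 he1H hxe1 he1w
      -- splice t into w at x
      set w1 := w.takeUntil x hx with hw1
      set w2 := w.dropUntil x hx with hw2
      have hspec : w1.append w2 = w := Walk.take_spec w hx
      set w' := w1.append (t.append w2) with hw'def
      have hedges : w'.edges = w1.edges ++ (t.edges ++ w2.edges) := by
        rw [hw'def, Walk.edges_append, Walk.edges_append]
      have hwedges : w.edges = w1.edges ++ w2.edges := by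
        rw [← hspec, Walk.edges_append]
      have hperm : w'.edges.Perm (t.edges ++ w.edges) := by
        rw [hedges, hwedges]
        have p1 : (w1.edges ++ (t.edges ++ w2.edges)).Perm
            ((t.edges ++ w2.edges) ++ w1.edges) := List.perm_append_comm
        have p2 : ((t.edges ++ w2.edges) ++ w1.edges)
            = t.edges ++ (w2.edges ++ w1.edges) := List.append_assoc _ _ _
        have p3 : (t.edges ++ (w2.edges ++ w1.edges)).Perm
            (t.edges ++ (w1.edges ++ w2.edges)) :=
          List.Perm.append_left _ List.perm_append_comm
        exact (p1.trans (p2 ▸ List.Perm.refl _)).trans p3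
      have hw'trail : w'.IsTrail := by
        rw [Walk.isTrail_def, hperm.nodup_iff]
        refine List.Nodup.append ht.edges_nodup hw.edges_nodup ?_
        intro e het hew
        exact (htsub e het).2 hew
      have hw'sub : ∀ e ∈ w'.edges, e ∈ H.edgeSet := by
        intro e he
        rcases List.mem_append.mp (hperm.mem_iff.mp he) with h | h
        · exact (htsub _ h).1
        · exact hsub e h
      have hmono : ∀ e ∈ w.edges, e ∈ w'.edges := by
        intro e he
        exact hperm.mem_iff.mpr (List.mem_append.mpr (Or.inr he))
      have hstrict : (H.edgeSet \ {e | e ∈ w'.edges}).ncard <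
          (H.edgeSet \ {e | e ∈ w.edges}).ncard := by
        apply Set.ncard_lt_ncard
        · constructor
          · intro e he
            exact ⟨he.1, fun hmem => he.2 (hmono e hmem)⟩
          · intro habs
            obtain ⟨et, het⟩ := List.exists_mem_of_length_pos
              (by rw [Walk.length_edges]; omega : 0 < t.edges.length)
            have h1 : et ∈ H.edgeSet \ {e | e ∈ w.edges} :=
              ⟨(htsub et het).1, (htsub et het).2⟩
            have h2 : et ∈ w'.edges := hperm.mem_iff.mpr (List.mem_append.mpr (Or.inl het))
            exact (habs h1).2 h2
        · exact hfin.sdiff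
      rw [hn] at hstrict
      exact IH _ hstrict w' hw'trail hw'sub rfl

theorem euler (hfin : H.edgeSet.Finite) (hconn : H.Connected)
    (heven : ∀ x, Even (sdeg H x)) (c : V) (hc : c ∈ H.verts) :
    ∃ w : G.Walk c c, w.IsTrail ∧ (∀ e, e ∈ w.edges ↔ e ∈ H.edgeSet) ∧
      ∀ y ∈ H.verts, y ∈ w.support := by
  obtain ⟨w, hw, hiff⟩ := euler_loop hfin hconn heven c hc
    ((H.edgeSet \ {e | e ∈ Walk.edges Walk.nil}).ncard) Walk.nil (by simp [Walk.isTrail_def])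
    (by simp) rfl
  refine ⟨w, hw, hiff, ?_⟩
  intro y hy
  by_cases hyc : y = c
  · subst hyc; exact Walk.start_mem_support w
  · obtain ⟨z, hz⟩ := subgraph_neighbor_nonempty hconn hy hc hyc
    have : s(y, z) ∈ w.edges := (hiff _).mpr (Subgraph.mem_edgeSet.mpr hz)
    exact Walk.fst_mem_support_of_mem_edges w this

end Euler

lemma chain'_and {β : Type*} {R S : β → β → Prop} :
    ∀ {l : List β}, List.Chain' R l → List.Chain' S l →
      List.Chain' (fun a b => R a b ∧ S a b) l
  | [], _, _ => List.isChain_nil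
  | [_], _, _ => List.isChain_singleton _
  | a :: b :: t, hR, hS => by
    rw [List.Chain', List.isChain_cons_cons] at hR hS ⊢
    exact ⟨⟨hR.1, hS.1⟩, chain'_and hR.2 hS.2⟩

/-- If `G` has a circuit `H` with `|Ē(H)| ≥ 3`, then `L(G)` has a cycle `C` with
`V(C) = Ē(H)`. -/
theorem stmt5 {V : Type*} (G : SimpleGraph V) (H : G.Subgraph)
    (hH : IsCircuit H) (h3 : 3 ≤ (barE G H).ncard) :
    ∃ (a : G.edgeSet) (C : G.lineGraph.Walk a a), C.IsCycle ∧
      ∀ f : G.edgeSet, f ∈ C.support ↔ (f : Sym2 V) ∈ barE G H := by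
  classical
  obtain ⟨hconn, heven⟩ := hH
  have hfinBar : (barE G H).Finite := by
    by_contra hinf
    rw [Set.Infinite.ncard hinf] at h3
    omega
  have hEsub : H.edgeSet ⊆ barE G H := by
    intro e he
    refine ⟨H.edgeSet_subset he, ?_⟩
    induction e using Sym2.ind with
    | _ a b => exact ⟨a, H.edge_vert (Subgraph.mem_edgeSet.mp he), by simp⟩
  have hfinE : H.edgeSet.Finite := hfinBar.subset hEsub
  obtain ⟨c, hc⟩ := hconn.nonempty
  obtain ⟨w, hw, hiff, hverts⟩ := euler hfinE hconn heven c hc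
  set pend : Set (Sym2 V) := barE G H \ H.edgeSet with hpenddef
  have hfinP : pend.Finite := hfinBar.sdiff
  set r : Sym2 V → V := fun f => if h : ∃ v ∈ H.verts, v ∈ f then h.choose else c with hrdef
  have hrmem : ∀ f ∈ barE G H, r f ∈ H.verts ∧ r f ∈ f := by
    intro f hf
    obtain ⟨-, hex⟩ := hf
    rw [hrdef]
    simp only [dif_pos hex]
    exact ⟨hex.choose_spec.1, hex.choose_spec.2⟩
  set pl : List (Sym2 V) := hfinP.toFinset.toList with hpldef
  have hplnodup : pl.Nodup := Finset.nodup_toList _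
  have hplmem : ∀ f, f ∈ pl ↔ f ∈ pend := by
    intro f
    rw [hpldef, Finset.mem_toList, Set.Finite.mem_toFinset]
  set P : V → List (Sym2 V) := fun v => pl.filter (fun f => r f = v) with hPdef
  have hPn : ∀ x, (P x).Nodup := fun x => hplnodup.filter _
  have hPr : ∀ x f, f ∈ P x → r f = x := by
    intro x f hf
    have hf' : f ∈ pl.filter (fun f => decide (r f = x)) := hf
    simpa using (List.mem_filter.mp hf').2
  have hPmem : ∀ x f, f ∈ P x → f ∈ pend :=
    fun x f hf => (hplmem f).mp (List.mem_of_mem_filter hf)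
  have hdisj : ∀ x y f, f ∈ P x → f ∈ P y → x = y := by
    intro x y f hx hy
    rw [← hPr x f hx, hPr y f hy]
  have hPe : ∀ x f, f ∈ P x → f ∉ w.edges := by
    intro x f hf hfw
    exact (hPmem x f hf).2 ((hiff f).mp hfw)
  have hPin : ∀ x f, f ∈ P x → x ∈ f := by
    intro x f hf
    rw [← hPr x f hf]
    exact (hrmem f (hPmem x f hf).1).2
  set l := ins w P with hldef
  have hmemL : ∀ f, f ∈ l ↔ f ∈ barE G H := by
    intro f
    rw [hldef, mem_ins]
    constructor
    · rintro (hf | ⟨x, hx, hfx⟩)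
      · exact hEsub ((hiff f).mp hf)
      · exact (hPmem x f hfx).1
    · intro hf
      by_cases hfe : f ∈ H.edgeSet
      · exact Or.inl ((hiff f).mpr hfe)
      · have hfp : f ∈ pend := ⟨hf, hfe⟩
        refine Or.inr ⟨r f, hverts _ (hrmem f hf).1, ?_⟩
        rw [hPdef]
        exact List.mem_filter.mpr ⟨(hplmem f).mpr hfp, by simp⟩
  have hnodupL : l.Nodup := ins_nodup w P hw hPn hdisj hPe
  obtain ⟨hchainL, hheadL, hlastL⟩ := ins_chain w P hPin
  rw [← hldef] at hchainL hheadL hlastL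
  have hlsub : ∀ f ∈ l, f ∈ G.edgeSet := fun f hf => ((hmemL f).mp hf).1
  have hlenL : 3 ≤ l.length := by
    have h1 : l.toFinset.card = l.length := List.toFinset_card_of_nodup hnodupL
    have h2 : (barE G H).ncard = l.toFinset.card := by
      rw [← Set.ncard_coe_finset]
      congr 1
      ext f
      simp [← hmemL f]
    omega
  obtain ⟨L, hmap⟩ : ∃ L : List G.edgeSet, L.map Subtype.val = l := by
    refine ⟨l.pmap (fun e he => (⟨e, he⟩ : G.edgeSet)) hlsub, ?_⟩
    rw [List.map_pmap]
    exact (List.pmap_eq_map _).trans (List.map_id _)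
  have hnodupL' : L.Nodup := by
    have : (L.map Subtype.val).Nodup := hmap ▸ hnodupL
    exact this.of_map
  have hchainL' : List.Chain' (fun a b : G.edgeSet => Share (a : Sym2 V) b) L := by
    rw [List.Chain', ← List.isChain_map Subtype.val, hmap]
    exact hchainL
  have hchainAdj : List.Chain' G.lineGraph.Adj L := by
    have hne : List.Chain' (fun a b : G.edgeSet => a ≠ b) L := List.Pairwise.isChain hnodupL'
    refine (chain'_and hne hchainL').imp ?_
    rintro a b ⟨hab, z, hz1, hz2⟩
    exact lineGraph_adj_iff_exists.mpr ⟨hab, z, hz1, hz2⟩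
  have hLlen : 3 ≤ L.length := by
    have : L.length = l.length := by rw [← hmap, List.length_map]
    omega
  match L, hmap, hnodupL', hchainAdj, hLlen with
  | a :: b :: m, hmap, hnodupL', hchainAdj, hLlen =>
  have hm : m ≠ [] := by
    intro hmnil
    subst hmnil
    simp at hLlen
  have hchain : List.Chain G.lineGraph.Adj a (b :: m) := hchainAdj
  have hheadc : c ∈ (a : Sym2 V) := by
    apply hheadL
    rw [← hmap]
    simp
  have hlastc : c ∈ ((m.getLast hm : G.edgeSet) : Sym2 V) := by
    apply hlastL
    rw [← hmap]
    have h1 : (a :: b :: m).getLast (by simp) = m.getLast hm := by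
      rw [List.getLast_cons (by simp [hm]), List.getLast_cons hm]
    rw [List.getLast?_map]
    rw [List.getLast?_eq_getLast (by simp), h1]
    simp
  have hlasta : (m.getLast hm) ≠ a := by
    intro heq
    have : a ∈ b :: m := by
      rw [← heq]
      exact List.mem_cons_of_mem b (List.getLast_mem hm)
    rw [List.nodup_cons] at hnodupL'
    exact hnodupL'.1 this
  have hcyc : G.lineGraph.Adj (m.getLast hm) a :=
    lineGraph_adj_iff_exists.mpr ⟨hlasta, c, hlastc, hheadc⟩
  obtain ⟨C, hCcyc, hCsupp⟩ := cycle_of_chain a b m hm hnodupL' hchain hcyc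
  refine ⟨a, C, hCcyc, ?_⟩
  intro f
  rw [hCsupp f, ← hmemL, ← hmap]
  constructor
  · intro hf
    exact List.mem_map.mpr ⟨f, hf, rfl⟩
  · intro hf
    obtain ⟨g, hg, hgf⟩ := List.mem_map.mp hf
    exact (Subtype.ext hgf : g = f) ▸ hg
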